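/- Let g ~ qbl(k1, γ) with witness constant d, set k0 := ⌈log N / γ⌉ and suppose N ≥ e^{γ k1}. Then for every i ∈ {1,…,N} and every bijection h of {1,…,N}: E[ |g(t_{h(i)}) − g(t_i)|² ] ≤ 3·E[ |g^{k0}(t_{h(i)}) − g^{k0}(t_i)|² ] + 24·d²/((1 − e^{−γ})²·N²). -/

import Mathlib

open MeasureTheory ProbabilityTheory Finset

noncomputable section

/-- `t` is the vector of order statistics of `N` i.i.d. samples from the uniform
distribution on the interval `[0, b]`: there exist i.i.d. random variables `u i`,
each uniformly distributed on `[0, b]`, such that for every `ω` the vector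
`(t i ω)_i` is the monotone rearrangement of `(u i ω)_i`. -/
def IsUniformOrderStats {Ω : Type*} [MeasurableSpace Ω] (μ : Measure Ω) (b : ℝ)
    {N : ℕ} (t : Fin N → Ω → ℝ) : Prop :=
  ∃ u : Fin N → Ω → ℝ,
    (∀ i, Measurable (u i)) ∧
    iIndepFun u μ ∧
    (∀ i, Measure.map (u i) μ = (ENNReal.ofReal b)⁻¹ • volume.restrict (Set.Icc 0 b)) ∧
    ∀ ω, Monotone (fun i => t i ω) ∧ ∃ σ : Equiv.Perm (Fin N), ∀ i, t i ω = u (σ i) ω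

/-- The 1-periodic trigonometric polynomial `∑_{|k| ≤ k0} c k · e^{2πjkx}`. -/
def trigPoly (k0 : ℕ) (c : ℤ → ℂ) (x : ℝ) : ℂ :=
  ∑ k ∈ Finset.Icc (-(k0 : ℤ)) (k0 : ℤ), c k *
    Complex.exp (2 * (Real.pi : ℂ) * Complex.I * (k : ℂ) * (x : ℂ))

private lemma meas_inf' {ι Ω : Type*} [MeasurableSpace Ω] {s : Finset ι}
    (hs : s.Nonempty) {f : ι → Ω → ℝ} (hf : ∀ i ∈ s, Measurable (f i)) :
    Measurable (fun ω => s.inf' hs (fun i => f i ω)) := by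
  have : Measurable (s.inf' hs f) :=
    Finset.inf'_induction hs _ (fun _f hf _g hg => hf.inf hg) hf
  convert this using 1
  ext ω
  simp [Finset.inf'_apply]

private lemma measurable_orderStat {Ω : Type*} [MeasurableSpace Ω] {N : ℕ}
    (u t : Fin N → Ω → ℝ) (hu : ∀ i, Measurable (u i))
    (ht : ∀ ω, Monotone (fun i => t i ω) ∧ ∃ σ : Equiv.Perm (Fin N), ∀ i, t i ω = u (σ i) ω)
    (j : Fin N) : Measurable (t j) := by
  classical
  have hcard : (j : ℕ) + 1 ≤ N := j.2
  set 𝒮 : Finset (Finset (Fin N)) := Finset.univ.powersetCard ((j : ℕ) + 1) with h𝒮def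
  have h𝒮 : 𝒮.Nonempty := Finset.powersetCard_nonempty.2 (by simpa using hcard)
  have hSne : ∀ S ∈ 𝒮, S.Nonempty := by
    intro S hS
    rw [h𝒮def, Finset.mem_powersetCard] at hS
    exact Finset.card_pos.1 (by omega)
  set F : Finset (Fin N) → Ω → ℝ :=
    fun S ω => if hS : S.Nonempty then S.sup' hS (fun k => u k ω) else 0 with hFdef
  have key : ∀ ω, t j ω = 𝒮.inf' h𝒮 (fun S => F S ω) := by
    intro ω
    obtain ⟨mono, σ, hσ⟩ := ht ω
    apply le_antisymm
    · apply Finset.le_inf'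
      intro S hS
      have hSne' := hSne S hS
      rw [hFdef]
      simp only [dif_pos hSne']
      obtain ⟨l, hl, hjl⟩ : ∃ l ∈ S.image σ.symm, j ≤ l := by
        by_contra hc
        push_neg at hc
        have hsub : S.image σ.symm ⊆ Finset.Iio j := by
          intro l hl
          exact Finset.mem_Iio.2 (hc l hl)
        have h1 : (S.image σ.symm).card = (j : ℕ) + 1 := by
          rw [Finset.card_image_of_injective _ σ.symm.injective]
          rw [h𝒮def, Finset.mem_powersetCard] at hS
          exact hS.2
        have h2 := Finset.card_le_card hsub
        rw [h1, Fin.card_Iio] at h2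
        omega
      obtain ⟨k, hk, hkl⟩ := Finset.mem_image.1 hl
      calc t j ω ≤ t l ω := mono hjl
        _ = u (σ l) ω := hσ l
        _ = u k ω := by rw [← hkl]; simp
        _ ≤ S.sup' hSne' (fun k => u k ω) := Finset.le_sup' (fun k => u k ω) hk
    · have hS0 : ((Finset.Iic j).image σ) ∈ 𝒮 := by
        rw [h𝒮def, Finset.mem_powersetCard]
        refine ⟨Finset.subset_univ _, ?_⟩
        rw [Finset.card_image_of_injective _ σ.injective, Fin.card_Iic]
      refine (Finset.inf'_le _ hS0).trans ?_
      rw [hFdef]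
      have hne : ((Finset.Iic j).image σ).Nonempty := hSne _ hS0
      simp only [dif_pos hne]
      apply Finset.sup'_le
      intro k hk
      obtain ⟨l, hl, rfl⟩ := Finset.mem_image.1 hk
      calc u (σ l) ω = t l ω := (hσ l).symm
        _ ≤ t j ω := mono (Finset.mem_Iic.1 hl)
  have : Measurable fun ω => 𝒮.inf' h𝒮 (fun S => F S ω) := by
    apply meas_inf'
    intro S hS
    have hSne' := hSne S hS
    rw [hFdef]
    simp only [dif_pos hSne']
    have := Finset.measurable_sup' hSne' (fun k (_ : k ∈ S) => hu k)
    convert this using 1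
    ext ω
    simp [Finset.sup'_apply]
  convert this using 1
  ext ω
  exact key ω

private lemma norm_e_eq_one (k : ℤ) (x : ℝ) :
    ‖Complex.exp (2 * (Real.pi : ℂ) * Complex.I * (k : ℂ) * (x : ℂ))‖ = 1 := by
  have h : 2 * (Real.pi : ℂ) * Complex.I * (k : ℂ) * (x : ℂ)
      = ((2 * Real.pi * k * x : ℝ) : ℂ) * Complex.I := by push_cast; ring
  rw [h, Complex.norm_exp_ofReal_mul_I]

private lemma tail_bound (γ : ℝ) (hγ : 0 < γ) (d : ℝ) (hd : 0 ≤ d) (k0 : ℕ)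
    (a : ℤ → ℂ) (g : ℝ → ℂ)
    (hsum : ∀ x : ℝ, HasSum (fun k : ℤ =>
      a k * Complex.exp (2 * (Real.pi : ℂ) * Complex.I * (k : ℂ) * (x : ℂ))) (g x))
    (ha : ∀ k : ℤ, (k0 : ℤ) < |k| → ‖a k‖ ≤ d * Real.exp (-γ) ^ k.natAbs)
    (x : ℝ) :
    ‖g x - trigPoly k0 a x‖
      ≤ 2 * (d * Real.exp (-γ) ^ (k0 + 1) * (1 - Real.exp (-γ))⁻¹) := by
  classical
  set r := Real.exp (-γ) with hrdef
  have hr0 : 0 < r := Real.exp_pos _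
  have hr1 : r < 1 := by
    rw [hrdef]
    exact Real.exp_lt_one_iff.2 (by linarith)
  set f : ℤ → ℂ := fun k =>
    a k * Complex.exp (2 * (Real.pi : ℂ) * Complex.I * (k : ℂ) * (x : ℂ)) with hfdef
  have hnf : ∀ k, ‖f k‖ = ‖a k‖ := by
    intro k
    rw [hfdef]
    simp [norm_e_eq_one k x]
  set S : ℝ := d * r ^ (k0 + 1) * (1 - r)⁻¹ with hSdef
  set W : ℤ → ℝ := fun k => if |k| ≤ (k0 : ℤ) then 0 else d * r ^ k.natAbs with hWdef
  have hW0 : ∀ k, 0 ≤ W k := by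
    intro k
    rw [hWdef]
    dsimp only
    split <;> positivity
  have hgeo : HasSum (fun n : ℕ => d * r ^ (k0 + 1) * r ^ n) S := by
    simpa [hSdef] using (hasSum_geometric_of_lt_one hr0.le hr1).mul_left (d * r ^ (k0 + 1))
  set Wp : ℕ → ℝ := fun n => W n with hWpdef
  set Wm : ℕ → ℝ := fun n => W (-((n : ℤ) + 1)) with hWmdef
  have hWp : HasSum Wp S := by
    have h1 : HasSum (fun n : ℕ => Wp (n + (k0 + 1))) S := by
      convert hgeo using 1
      funext n
      have habs : |((n + (k0 + 1) : ℕ) : ℤ)| = ((n + (k0 + 1) : ℕ) : ℤ) :=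
        abs_of_nonneg (Int.natCast_nonneg _)
      rw [hWpdef, hWdef]
      dsimp only
      simp only [habs]
      rw [if_neg (by omega), Int.natAbs_natCast, pow_add]
      ring
    rw [hasSum_nat_add_iff (k0 + 1)] at h1
    have hzero : ∑ i ∈ Finset.range (k0 + 1), Wp i = 0 := by
      apply Finset.sum_eq_zero
      intro i hi
      rw [Finset.mem_range] at hi
      have habs : |((i : ℕ) : ℤ)| = ((i : ℕ) : ℤ) := abs_of_nonneg (Int.natCast_nonneg _)
      rw [hWpdef, hWdef]
      dsimp only
      simp only [habs]
      rw [if_pos (by omega)]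
    rw [hzero, add_zero] at h1
    exact h1
  have hWm : HasSum Wm S := by
    have h2 : HasSum (fun n : ℕ => Wm (n + k0)) S := by
      convert hgeo using 1
      funext n
      have habs : |(-(((n + k0 : ℕ) : ℤ) + 1))| = ((n + k0 : ℕ) : ℤ) + 1 := by
        rw [abs_neg]
        exact abs_of_nonneg (by positivity)
      rw [hWmdef, hWdef]
      dsimp only
      simp only [habs]
      rw [if_neg (by omega)]
      have hna : (-(((n + k0 : ℕ) : ℤ) + 1)).natAbs = n + k0 + 1 := by omega
      rw [hna, pow_add, pow_add]
      ring
    rw [hasSum_nat_add_iff k0] at h2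
    have hzero : ∑ i ∈ Finset.range k0, Wm i = 0 := by
      apply Finset.sum_eq_zero
      intro i hi
      rw [Finset.mem_range] at hi
      have habs : |(-(((i : ℕ) : ℤ) + 1))| = ((i : ℕ) : ℤ) + 1 := by
        rw [abs_neg]
        exact abs_of_nonneg (by positivity)
      rw [hWmdef, hWdef]
      dsimp only
      simp only [habs]
      rw [if_pos (by omega)]
    rw [hzero, add_zero] at h2
    exact h2
  have hWsum : HasSum W (S + S) := by
    refine HasSum.of_nat_of_neg_add_one hWp ?_
    exact hWm
  have hsf : Summable f := (hsum x).summable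
  have hsn : Summable (fun k => ‖f k‖) := summable_norm_iff.2 hsf
  set T : Finset ℤ := Finset.Icc (-(k0 : ℤ)) (k0 : ℤ) with hTdef
  have key : g x - trigPoly k0 a x = ∑' k : ↑((T : Set ℤ)ᶜ), f k := by
    have h3 := Summable.sum_add_tsum_compl (s := T) hsf
    rw [(hsum x).tsum_eq] at h3
    rw [sub_eq_iff_eq_add']
    rw [trigPoly, ← hTdef]
    exact h3.symm
  have hmem : ∀ k : ↑((T : Set ℤ)ᶜ), (k0 : ℤ) < |(k : ℤ)| := by
    rintro ⟨k, hk⟩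
    simp only [Set.mem_compl_iff, Finset.coe_sort_coe, Finset.mem_coe, hTdef,
      Finset.mem_Icc] at hk
    simp only
    rw [Int.abs_eq_natAbs]
    omega
  rw [key]
  calc ‖∑' k : ↑((T : Set ℤ)ᶜ), f k‖ ≤ ∑' k : ↑((T : Set ℤ)ᶜ), ‖f (k : ℤ)‖ :=
        norm_tsum_le_tsum_norm (hsn.subtype _)
    _ ≤ ∑' k : ↑((T : Set ℤ)ᶜ), W (k : ℤ) := by
        apply Summable.tsum_le_tsum _ (hsn.subtype _) (hWsum.summable.subtype _)
        intro k
        simp only [Function.comp_apply]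
        rw [hnf]
        have hk := hmem k
        have hub := ha k hk
        rw [hWdef]
        dsimp only
        rw [if_neg (by omega)]
        exact hub
    _ ≤ ∑' k, W k := Summable.tsum_subtype_le W _ hW0 hWsum.summable
    _ = S + S := hWsum.tsum_eq
    _ = 2 * (d * r ^ (k0 + 1) * (1 - r)⁻¹) := by rw [hSdef]; ring

/-- For `g ~ qbl(k1, γ)` with witness `d`, `k0 = ⌈log N / γ⌉`,
`N ≥ e^{γ k1}`, every `i` and every bijection `h`:
`E[|g(t_{h(i)}) − g(t_i)|²] ≤ 3 E[|g^{k0}(t_{h(i)}) − g^{k0}(t_i)|²]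
  + 24 d²/((1 − e^{−γ})² N²)`. -/
theorem misordering_qbl_to_bandlimited (γ : ℝ) (hγ : 0 < γ) (d : ℝ) (hd : 0 ≤ d)
    (k1 N : ℕ) (Ω : Type) [MeasurableSpace Ω] (μ : Measure Ω)
    [IsProbabilityMeasure μ] (t : Fin N → Ω → ℝ) (g : ℝ → ℂ) (a : ℤ → ℂ)
    (h : Equiv.Perm (Fin N)) (i : Fin N) (k0 : ℕ)
    (hord : IsUniformOrderStats μ 1 t)
    (hper : Function.Periodic g 1)
    (hbd : ∀ x : ℝ, ‖g x‖ < 1)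
    (hsum : ∀ x : ℝ, HasSum (fun k : ℤ =>
      a k * Complex.exp (2 * (Real.pi : ℂ) * Complex.I * (k : ℂ) * (x : ℂ))) (g x))
    (hqbl : ∀ k : ℤ, (k1 : ℤ) ≤ |k| → ‖a k‖ ≤ d * Real.exp (-γ * (|k| : ℤ)))
    (hk0 : k0 = ⌈Real.log N / γ⌉₊)
    (hN : Real.exp (γ * k1) ≤ N) :
    (∫ ω, ‖g (t (h i) ω) - g (t i ω)‖ ^ 2 ∂μ)
      ≤ 3 * (∫ ω, ‖trigPoly k0 a (t (h i) ω) - trigPoly k0 a (t i ω)‖ ^ 2 ∂μ)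
        + 24 * d ^ 2 / ((1 - Real.exp (-γ)) ^ 2 * (N : ℝ) ^ 2) := by
  classical
  obtain ⟨u, hu, -, -, hut⟩ := hord
  have ht_meas : ∀ j, Measurable (t j) := fun j => measurable_orderStat u t hu hut j
  set r := Real.exp (-γ) with hrdef
  have hr0 : (0:ℝ) < r := Real.exp_pos _
  have hr1 : r < 1 := by
    rw [hrdef]
    exact Real.exp_lt_one_iff.2 (by linarith)
  have h1r : 0 < 1 - r := by linarith
  have hN1 : (1:ℝ) ≤ N := le_trans (Real.one_le_exp (by positivity)) hN
  have hNpos : (0:ℝ) < N := by linarith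
  have hlog : Real.log N ≤ γ * k0 := by
    have hceil := Nat.le_ceil (Real.log N / γ)
    calc Real.log N = γ * (Real.log N / γ) := by field_simp
      _ ≤ γ * k0 := by
          rw [hk0]
          exact mul_le_mul_of_nonneg_left hceil hγ.le
  have hk1le : k1 ≤ k0 := by
    have h1 : γ * k1 ≤ Real.log N := (Real.le_log_iff_exp_le hNpos).2 hN
    have h2 : (k1:ℝ) ≤ Real.log N / γ := by
      rw [le_div_iff₀ hγ]
      linarith
    have h3 : (k1:ℝ) ≤ (k0:ℝ) := by
      rw [hk0]
      exact h2.trans (Nat.le_ceil _)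
    exact_mod_cast h3
  have ha : ∀ k : ℤ, (k0:ℤ) < |k| → ‖a k‖ ≤ d * r ^ k.natAbs := by
    intro k hk
    have h1 : (k1:ℤ) ≤ |k| := by
      rw [Int.abs_eq_natAbs] at hk ⊢
      omega
    have h2 := hqbl k h1
    have h3 : (-γ * ((|k| : ℤ) : ℝ)) = (k.natAbs : ℝ) * (-γ) := by
      rw [Int.abs_eq_natAbs, Int.cast_natCast]
      ring
    rw [h3, Real.exp_nat_mul] at h2
    exact h2
  set M := 2 * (d * r ^ (k0 + 1) * (1 - r)⁻¹) with hMdef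
  have hM0 : 0 ≤ M := by
    rw [hMdef]
    apply mul_nonneg (by norm_num)
    exact mul_nonneg (by positivity) (inv_nonneg.2 h1r.le)
  set P := trigPoly k0 a with hPdef
  have htail : ∀ x, ‖g x - P x‖ ≤ M := by
    intro x
    have := tail_bound γ hγ d hd k0 a g hsum ha x
    rw [← hMdef, ← hPdef] at this
    exact this
  have hpt : ∀ ω, ‖g (t (h i) ω) - g (t i ω)‖ ^ 2
      ≤ 3 * ‖P (t (h i) ω) - P (t i ω)‖ ^ 2 + 6 * M ^ 2 := by
    intro ω
    set x := t (h i) ω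
    set y := t i ω
    have hA0 : (0:ℝ) ≤ ‖P x - P y‖ := norm_nonneg _
    have hG0 : (0:ℝ) ≤ ‖g x - g y‖ := norm_nonneg _
    have h1 : ‖g x - g y‖ ≤ ‖P x - P y‖ + 2 * M := by
      have e1 : g x - g y = (P x - P y) + ((g x - P x) - (g y - P y)) := by ring
      rw [e1]
      have h2 := norm_add_le (P x - P y) ((g x - P x) - (g y - P y))
      have h3 := norm_sub_le (g x - P x) (g y - P y)
      have h4 := htail x
      have h5 := htail y
      linarith
    nlinarith [sq_nonneg (‖P x - P y‖ - M)]
  have hPcont : Continuous P := by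
    rw [hPdef]
    unfold trigPoly
    apply continuous_finset_sum
    intro k _
    exact continuous_const.mul
      (Complex.continuous_exp.comp (continuous_const.mul Complex.continuous_ofReal))
  set C : ℝ := ∑ k ∈ Finset.Icc (-(k0 : ℤ)) (k0 : ℤ), ‖a k‖ with hCdef
  have hPbd : ∀ x, ‖P x‖ ≤ C := by
    intro x
    rw [hPdef]
    unfold trigPoly
    refine (norm_sum_le _ _).trans ?_
    apply Finset.sum_le_sum
    intro k _
    rw [norm_mul, norm_e_eq_one, mul_one]
  have hp_meas : Measurable fun ω => ‖P (t (h i) ω) - P (t i ω)‖ ^ 2 :=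
    (((hPcont.measurable.comp (ht_meas (h i))).sub
      (hPcont.measurable.comp (ht_meas i))).norm).pow_const 2
  have hp_int : Integrable (fun ω => ‖P (t (h i) ω) - P (t i ω)‖ ^ 2) μ := by
    refine Integrable.mono' (integrable_const ((2 * C) ^ 2)) hp_meas.aestronglyMeasurable ?_
    filter_upwards with ω
    rw [Real.norm_eq_abs, abs_of_nonneg (by positivity)]
    have hb : ‖P (t (h i) ω) - P (t i ω)‖ ≤ 2 * C := by
      have hx := hPbd (t (h i) ω)
      have hy := hPbd (t i ω)
      have := norm_sub_le (P (t (h i) ω)) (P (t i ω))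
      linarith
    exact pow_le_pow_left₀ (norm_nonneg _) hb 2
  have hmono : (∫ ω, ‖g (t (h i) ω) - g (t i ω)‖ ^ 2 ∂μ)
      ≤ ∫ ω, (3 * ‖P (t (h i) ω) - P (t i ω)‖ ^ 2 + 6 * M ^ 2) ∂μ :=
    integral_mono_of_nonneg (ae_of_all μ fun ω => by positivity)
      ((hp_int.const_mul 3).add (integrable_const (6 * M ^ 2))) (ae_of_all μ hpt)
  have heq : (∫ ω, (3 * ‖P (t (h i) ω) - P (t i ω)‖ ^ 2 + 6 * M ^ 2) ∂μ)
      = 3 * (∫ ω, ‖P (t (h i) ω) - P (t i ω)‖ ^ 2 ∂μ) + 6 * M ^ 2 := by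
    rw [integral_add (hp_int.const_mul 3) (integrable_const _), integral_const_mul,
      integral_const]
    simp [measure_univ]
  have hq : r ^ (k0 + 1) * N ≤ 1 := by
    have hNe : (N:ℝ) = Real.exp (Real.log N) := (Real.exp_log hNpos).symm
    have he1 : r ^ (k0 + 1) = Real.exp (-(γ * (k0 + 1))) := by
      rw [hrdef, ← Real.exp_nat_mul]
      push_cast
      ring_nf
    rw [he1]
    nth_rewrite 1 [hNe]
    rw [← Real.exp_add]
    have hle : -(γ * (k0 + 1)) + Real.log N ≤ 0 := by
      have : γ * (k0:ℝ) ≤ γ * ((k0:ℝ) + 1) := by nlinarith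
      push_cast
      linarith
    calc Real.exp (-(γ * (↑k0 + 1)) + Real.log ↑N) ≤ Real.exp 0 := Real.exp_le_exp.2 hle
      _ = 1 := Real.exp_zero
  have hfinal : 6 * M ^ 2 ≤ 24 * d ^ 2 / ((1 - r) ^ 2 * (N:ℝ) ^ 2) := by
    rw [le_div_iff₀ (by positivity)]
    have hcancel : (1 - r)⁻¹ * (1 - r) = 1 := inv_mul_cancel₀ h1r.ne'
    have hqN0 : 0 ≤ r ^ (k0 + 1) * N := by positivity
    calc 6 * M ^ 2 * ((1 - r) ^ 2 * (N:ℝ) ^ 2)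
        = 24 * (d ^ 2 * ((r ^ (k0 + 1) * N) ^ 2) * ((1 - r)⁻¹ * (1 - r)) ^ 2) := by
          rw [hMdef]; ring
      _ = 24 * (d ^ 2 * ((r ^ (k0 + 1) * N) ^ 2)) := by rw [hcancel]; ring
      _ ≤ 24 * (d ^ 2 * 1) := by
          apply mul_le_mul_of_nonneg_left _ (by norm_num)
          exact mul_le_mul_of_nonneg_left (pow_le_one₀ hqN0 hq) (sq_nonneg d)
      _ = 24 * d ^ 2 := by ring
  calc (∫ ω, ‖g (t (h i) ω) - g (t i ω)‖ ^ 2 ∂μ)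
      ≤ ∫ ω, (3 * ‖P (t (h i) ω) - P (t i ω)‖ ^ 2 + 6 * M ^ 2) ∂μ := hmono
    _ = 3 * (∫ ω, ‖P (t (h i) ω) - P (t i ω)‖ ^ 2 ∂μ) + 6 * M ^ 2 := heq
    _ ≤ 3 * (∫ ω, ‖P (t (h i) ω) - P (t i ω)‖ ^ 2 ∂μ)
        + 24 * d ^ 2 / ((1 - r) ^ 2 * (N:ℝ) ^ 2) := by linarith
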